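/- Let d ≥ 1, ε > 0, let φ : ℝ^d → ℝ be twice continuously differentiable, let W : ℝ → [0, ∞) be continuously differentiable, and let η : ℝ^d → ℝ^d be continuously differentiable with compact support. Set H := −ε Δφ + ε^{−1} W'(φ). Then −ε ∫_{ℝ^d} Σ_{i,j=1}^d (∂_i φ)(∂_j φ)(∂_j η_i) dx = −∫_{ℝ^d} H · ⟨η, ∇φ⟩ dx − ∫_{ℝ^d} (div η) · √(2W(φ)) ‖∇φ‖ dx − ∫_{ℝ^d} (div η) · (1/2)( √ε‖∇φ‖ − √(2W(φ))/√ε )² dx. -/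

import Mathlib

open MeasureTheory


/-- integration by parts helper -/
theorem myIBP {d : ℕ} (f g : EuclideanSpace ℝ (Fin d) → ℝ)
    (hf : ContDiff ℝ 1 f) (hg : ContDiff ℝ 1 g)
    (hgc : HasCompactSupport g) (v : EuclideanSpace ℝ (Fin d)) :
    ∫ x, g x * fderiv ℝ f x v = -∫ x, fderiv ℝ g x v * f x := by
  have hfc : Continuous f := hf.continuous
  have hgcont : Continuous g := hg.continuous
  have hdg : Continuous fun x => fderiv ℝ g x v :=
    ((hg.fderiv_right (m := 0) (by norm_num)).continuous).clm_apply continuous_const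
  have hdf : Continuous fun x => fderiv ℝ f x v :=
    ((hf.fderiv_right (m := 0) (by norm_num)).continuous).clm_apply continuous_const
  have hcs1 : HasCompactSupport fun x => fderiv ℝ g x v * f x :=
    ((hgc.fderiv (𝕜 := ℝ)).comp_left (g := fun L : EuclideanSpace ℝ (Fin d) →L[ℝ] ℝ => L v)
      rfl).mul_right
  have hcs2 : HasCompactSupport fun x => g x * fderiv ℝ f x v := hgc.mul_right
  have hcs3 : HasCompactSupport fun x => g x * f x := hgc.mul_right
  exact integral_mul_fderiv_eq_neg_fderiv_mul_of_integrable
    ((hdg.mul hfc).integrable_of_hasCompactSupport hcs1)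
    ((hgcont.mul hdf).integrable_of_hasCompactSupport hcs2)
    ((hgcont.mul hfc).integrable_of_hasCompactSupport hcs3)
    (fun x _ => hg.differentiable one_ne_zero x) (fun x _ => hf.differentiable one_ne_zero x)

/-- algebra helper -/
theorem myAlg (ε a b : ℝ) (hε : 0 < ε) :
    b * a + 1 / 2 * (Real.sqrt ε * a - b / Real.sqrt ε) ^ 2
      = ε / 2 * a ^ 2 + ε⁻¹ * (b ^ 2 / 2) := by
  have hsq : Real.sqrt ε ^ 2 = ε := Real.sq_sqrt hε.le
  have hpos : (0:ℝ) < Real.sqrt ε := Real.sqrt_pos.mpr hε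
  set s := Real.sqrt ε with hs
  rw [← hsq]
  have hne : s ≠ 0 := ne_of_gt hpos
  field_simp
  ring

/-- Approximate Gibbs–Thomson identity: for `φ ∈ C²(ℝ^d)`,
`W ∈ C¹(ℝ; [0,∞))`, `η ∈ C¹_c(ℝ^d; ℝ^d)` and `H := −εΔφ + ε⁻¹W'(φ)`, testing the
capillary stress `ε∇φ⊗∇φ` against `∇η` produces the curvature term, the
surface-tension term with density `√(2W(φ))‖∇φ‖`, and a lack-of-equipartition
term. -/
theorem stmt13 (d : ℕ) (hd : 1 ≤ d) (ε : ℝ) (hε : 0 < ε)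
    (φ : EuclideanSpace ℝ (Fin d) → ℝ) (hφ : ContDiff ℝ 2 φ)
    (W : ℝ → ℝ) (hW : ContDiff ℝ 1 W) (hW0 : ∀ r, 0 ≤ W r)
    (η : EuclideanSpace ℝ (Fin d) → EuclideanSpace ℝ (Fin d))
    (hη : ContDiff ℝ 1 η) (hηc : HasCompactSupport η)
    (H : EuclideanSpace ℝ (Fin d) → ℝ)
    (hH : ∀ x, H x = -ε * (∑ i : Fin d,
          fderiv ℝ (fun y => fderiv ℝ φ y (EuclideanSpace.single i 1)) x
            (EuclideanSpace.single i 1))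
        + ε⁻¹ * deriv W (φ x)) :
    -ε * ∫ x, ∑ i : Fin d, ∑ j : Fin d,
          fderiv ℝ φ x (EuclideanSpace.single i 1)
            * fderiv ℝ φ x (EuclideanSpace.single j 1)
            * fderiv ℝ (fun y => η y i) x (EuclideanSpace.single j 1)
      = -(∫ x, H x * (inner ℝ (η x) (gradient φ x) : ℝ))
        - (∫ x, (∑ i : Fin d,
              fderiv ℝ (fun y => η y i) x (EuclideanSpace.single i 1))
            * (Real.sqrt (2 * W (φ x)) * ‖gradient φ x‖))
        - ∫ x, (∑ i : Fin d,
              fderiv ℝ (fun y => η y i) x (EuclideanSpace.single i 1))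
            * (1 / 2 * (Real.sqrt ε * ‖gradient φ x‖
                - Real.sqrt (2 * W (φ x)) / Real.sqrt ε) ^ 2) := by
  -- local abbreviations (definitionally transparent)
  let E := EuclideanSpace ℝ (Fin d)
  let e : Fin d → E := fun i => EuclideanSpace.single i 1
  let P : Fin d → E → ℝ := fun i x => fderiv ℝ φ x (e i)
  let N : Fin d → E → ℝ := fun i x => η x i
  let Q : Fin d → Fin d → E → ℝ := fun i j x => fderiv ℝ (P i) x (e j)
  let D : Fin d → Fin d → E → ℝ := fun i j x => fderiv ℝ (N i) x (e j)
  let F : E → ℝ := fun x => ε / 2 * (∑ k, P k x * P k x) + ε⁻¹ * W (φ x)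
  -- basic regularity facts
  have hφ1 : ContDiff ℝ 1 φ := hφ.of_le one_le_two
  have hPd : ∀ i, ContDiff ℝ 1 (P i) := fun i =>
    (hφ.fderiv_right (m := 1) (by norm_num)).clm_apply contDiff_const
  have hPdiff : ∀ i, Differentiable ℝ (P i) := fun i => (hPd i).differentiable one_ne_zero
  have hPc : ∀ i, Continuous (P i) := fun i => (hPd i).continuous
  have hQc : ∀ i j, Continuous (Q i j) := fun i j =>
    (((hPd i).fderiv_right (m := 0) (by norm_num)).continuous).clm_apply continuous_const
  have hNd : ∀ i, ContDiff ℝ 1 (N i) := fun i =>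
    (EuclideanSpace.proj i : E →L[ℝ] ℝ).contDiff.comp hη
  have hNc : ∀ i, Continuous (N i) := fun i => (hNd i).continuous
  have hNcs : ∀ i, HasCompactSupport (N i) := fun i =>
    hηc.comp_left (g := fun v : E => v i) rfl
  have hDc : ∀ i j, Continuous (D i j) := fun i j =>
    (((hNd i).fderiv_right (m := 0) (by norm_num)).continuous).clm_apply continuous_const
  have hDcs : ∀ i j, HasCompactSupport (D i j) := fun i j =>
    ((hNcs i).fderiv (𝕜 := ℝ)).comp_left (g := fun L : E →L[ℝ] ℝ => L (e j)) rfl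
  have hWφc : Continuous fun x => W (φ x) := hW.continuous.comp hφ1.continuous
  have hW'c : Continuous fun x => deriv W (φ x) :=
    (hW.continuous_deriv le_rfl).comp hφ1.continuous
  -- symmetry of second derivatives
  have hDφ : Differentiable ℝ (fderiv ℝ φ) :=
    (hφ.fderiv_right (m := 1) (by norm_num)).differentiable one_ne_zero
  have hPfd : ∀ (v : E) (y : E), HasFDerivAt (fun z => fderiv ℝ φ z v)
      ((ContinuousLinearMap.apply ℝ ℝ v).comp (fderiv ℝ (fderiv ℝ φ) y)) y := fun v y =>
    (ContinuousLinearMap.apply ℝ ℝ v).hasFDerivAt.comp y (hDφ y).hasFDerivAt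
  have hQsymm : ∀ i j x, Q i j x = Q j i x := by
    intro i j x
    have hsymm : IsSymmSndFDerivAt ℝ φ x := (hφ.contDiffAt).isSymmSndFDerivAt (by norm_num)
    show fderiv ℝ (fun z => fderiv ℝ φ z (e i)) x (e j)
        = fderiv ℝ (fun z => fderiv ℝ φ z (e j)) x (e i)
    rw [(hPfd (e i) x).fderiv, (hPfd (e j) x).fderiv]
    exact hsymm.eq _ _
  -- derivative of products of partial derivatives
  have hPmul : ∀ i j x v, fderiv ℝ (fun y => P i y * P j y) x v
      = P i x * fderiv ℝ (P j) x v + P j x * fderiv ℝ (P i) x v := by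
    intro i j x v
    rw [((hPdiff i x).hasFDerivAt.fun_mul (hPdiff j x).hasFDerivAt).fderiv]
    simp [smul_eq_mul]
  -- derivative of F
  have hWd : Differentiable ℝ W := hW.differentiable one_ne_zero
  have hFhas : ∀ x, HasFDerivAt F
      ((ε / 2) • (∑ k, (P k x • fderiv ℝ (P k) x + P k x • fderiv ℝ (P k) x))
        + ε⁻¹ • ((deriv W (φ x)) • fderiv ℝ φ x)) x := by
    intro x
    have h1 : HasFDerivAt (fun y => ∑ k, P k y * P k y)
        (∑ k, (P k x • fderiv ℝ (P k) x + P k x • fderiv ℝ (P k) x)) x :=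
      HasFDerivAt.fun_sum fun k _ => (hPdiff k x).hasFDerivAt.fun_mul (hPdiff k x).hasFDerivAt
    have h2 : HasFDerivAt (fun y => W (φ y)) ((deriv W (φ x)) • fderiv ℝ φ x) x :=
      (hWd (φ x)).hasDerivAt.comp_hasFDerivAt x (hφ1.differentiable one_ne_zero x).hasFDerivAt
    exact (h1.const_mul (ε / 2)).add (h2.const_mul ε⁻¹)
  have hF' : ∀ x j, fderiv ℝ F x (e j)
      = ε * (∑ k, P k x * Q k j x) + ε⁻¹ * (deriv W (φ x) * P j x) := by
    intro x j
    rw [(hFhas x).fderiv]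
    have h2 : ∑ k, (P k x * fderiv ℝ (P k) x (e j) + P k x * fderiv ℝ (P k) x (e j))
        = 2 * ∑ k, P k x * fderiv ℝ (P k) x (e j) := by
      rw [Finset.mul_sum]
      exact Finset.sum_congr rfl fun k _ => (two_mul _).symm
    have h3 : ∀ k, Q k j x = fderiv ℝ (P k) x (e j) := fun _ => rfl
    have h4 : P j x = fderiv ℝ φ x (e j) := rfl
    simp only [ContinuousLinearMap.add_apply, ContinuousLinearMap.smul_apply,
      ContinuousLinearMap.sum_apply, smul_eq_mul]
    rw [h2]
    simp only [h3, h4]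
    ring
  have hFcd : ContDiff ℝ 1 F :=
    (contDiff_const.mul (ContDiff.sum fun k _ => (hPd k).mul (hPd k))).add
      (contDiff_const.mul (hW.comp hφ1))
  -- gradient facts
  have hg1 : ∀ (x : E) (i : Fin d), gradient φ x i = P i x := by
    intro x i
    have h : (gradient φ x) i = (inner ℝ (gradient φ x) (e i) : ℝ) := by
      show _ = (inner ℝ (gradient φ x) (EuclideanSpace.single i 1) : ℝ)
      rw [EuclideanSpace.inner_single_right, one_mul, conj_trivial]
    rw [h, gradient, InnerProductSpace.toDual_symm_apply]
  have hg2 : ∀ x : E, ‖gradient φ x‖ ^ 2 = ∑ i, P i x * P i x := by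
    intro x
    rw [← real_inner_self_eq_norm_sq]
    simp only [PiLp.inner_apply, RCLike.inner_apply, conj_trivial]
    exact Finset.sum_congr rfl fun i _ => by rw [hg1]
  have hg3 : ∀ x : E, (inner ℝ (η x) (gradient φ x) : ℝ) = ∑ i, N i x * P i x := by
    intro x
    simp only [PiLp.inner_apply, RCLike.inner_apply, conj_trivial]
    exact Finset.sum_congr rfl fun i _ => by rw [hg1]; exact mul_comm _ _
  have hgn : Continuous fun x : E => ‖gradient φ x‖ := by
    have : Continuous fun x : E => gradient φ x :=
      (InnerProductSpace.toDual ℝ E).symm.continuous.comp (hφ1.continuous_fderiv one_ne_zero)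
    exact this.norm
  -- unfolding equations
  have hDun : ∀ i j x, D i j x = fderiv ℝ (N i) x (e j) := fun _ _ _ => rfl
  have hQun : ∀ (i : Fin d) (x : E),
      fderiv ℝ (fun y => fderiv ℝ φ y (EuclideanSpace.single i 1)) x (EuclideanSpace.single i 1)
        = Q i i x := fun _ _ => rfl
  -- integrability helpers
  have cInt : ∀ f : E → ℝ, Continuous f → HasCompactSupport f →
      Integrable f (volume : Measure E) := fun f hf hc => hf.integrable_of_hasCompactSupport hc
  have intN : ∀ (i : Fin d) (g : E → ℝ), Continuous g →
      Integrable (fun x => N i x * g x) (volume : Measure E) :=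
    fun i g hg => cInt _ ((hNc i).mul hg) ((hNcs i).mul_right)
  have hFc : Continuous F := hFcd.continuous
  have hscs : HasCompactSupport fun x : E => ∑ i, D i i x := by
    apply HasCompactSupport.intro hηc
    intro x hx
    have hz : ∀ i : Fin d, D i i x = 0 := by
      intro i
      have hsub : tsupport (N i) ⊆ tsupport η :=
        closure_mono (fun y hy => by
          simp only [Function.mem_support] at hy ⊢
          intro h0; exact hy (by simp [N, h0]))
      have hx' : x ∉ tsupport (N i) := fun h => hx (hsub h)
      have : fderiv ℝ (N i) x = 0 := by
        by_contra h
        exact hx' (support_fderiv_subset ℝ (Function.mem_support.mpr h))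
      rw [hDun, this]; rfl
    simp [hz]
  have hsc : Continuous fun x : E => ∑ i, D i i x :=
    continuous_finset_sum _ fun i _ => hDc i i
  -- restate the goal with abbreviations
  show -ε * ∫ x, ∑ i : Fin d, ∑ j : Fin d, P i x * P j x * D i j x
      = -(∫ x, H x * (inner ℝ (η x) (gradient φ x) : ℝ))
        - (∫ x, (∑ i, D i i x) * (Real.sqrt (2 * W (φ x)) * ‖gradient φ x‖))
        - ∫ x, (∑ i, D i i x) * (1 / 2 * (Real.sqrt ε * ‖gradient φ x‖
            - Real.sqrt (2 * W (φ x)) / Real.sqrt ε) ^ 2)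
  -- combine the surface tension and equipartition terms
  have hcont2 : Continuous fun x : E => Real.sqrt (2 * W (φ x)) :=
    Real.continuous_sqrt.comp (continuous_const.mul hWφc)
  have comb : (∫ x, (∑ i, D i i x) * (Real.sqrt (2 * W (φ x)) * ‖gradient φ x‖))
      + (∫ x, (∑ i, D i i x) * (1 / 2 * (Real.sqrt ε * ‖gradient φ x‖
          - Real.sqrt (2 * W (φ x)) / Real.sqrt ε) ^ 2))
      = ∫ x, (∑ i, D i i x) * F x := by
    rw [← integral_add
      (cInt _ (hsc.fun_mul (hcont2.fun_mul hgn)) hscs.mul_right)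
      (cInt _ (hsc.fun_mul (continuous_const.fun_mul
        (((continuous_const.fun_mul hgn).fun_sub (hcont2.div_const _)).fun_pow 2))) hscs.mul_right)]
    refine integral_congr_ae (Filter.Eventually.of_forall fun x => ?_)
    dsimp only
    rw [← mul_add]
    congr 1
    have hb : Real.sqrt (2 * W (φ x)) ^ 2 = 2 * W (φ x) := Real.sq_sqrt (by have := hW0 (φ x); linarith)
    rw [myAlg ε ‖gradient φ x‖ (Real.sqrt (2 * W (φ x))) hε, hb, hg2 x]
    show _ = ε / 2 * (∑ k, P k x * P k x) + ε⁻¹ * W (φ x)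
    ring
  rw [sub_sub, comb]
  -- integration by parts on the left-hand side
  have intPPD : ∀ i j : Fin d, Integrable (fun x => P i x * P j x * D i j x)
      (volume : Measure E) :=
    fun i j => cInt _ (((hPc i).mul (hPc j)).mul (hDc i j)) (hDcs i j).mul_left
  have EqL : (∫ x, ∑ i : Fin d, ∑ j : Fin d, P i x * P j x * D i j x)
      = ∑ i : Fin d, ∑ j : Fin d,
          (-(∫ x, N i x * (P i x * Q j j x)) - ∫ x, N i x * (P j x * Q j i x)) := by
    rw [integral_finset_sum _ (fun i _ => integrable_finset_sum _ (fun j _ => intPPD i j))]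
    refine Finset.sum_congr rfl fun i _ => ?_
    rw [integral_finset_sum _ (fun j _ => intPPD i j)]
    refine Finset.sum_congr rfl fun j _ => ?_
    have hibp := myIBP (fun y => P i y * P j y) (N i) ((hPd i).mul (hPd j))
      (hNd i) (hNcs i) (e j)
    have e1 : (∫ x, P i x * P j x * D i j x)
        = ∫ x, fderiv ℝ (N i) x (e j) * (P i x * P j x) := by
      refine integral_congr_ae (Filter.Eventually.of_forall fun x => ?_)
      dsimp only
      rw [← hDun]; ring
    have e2 : (∫ x, N i x * fderiv ℝ (fun y => P i y * P j y) x (e j))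
        = ∫ x, (N i x * (P i x * Q j j x) + N i x * (P j x * Q j i x)) := by
      refine integral_congr_ae (Filter.Eventually.of_forall fun x => ?_)
      dsimp only
      rw [hPmul i j x (e j)]
      have r1 : fderiv ℝ (P j) x (e j) = Q j j x := rfl
      have r2 : fderiv ℝ (P i) x (e j) = Q i j x := rfl
      rw [r1, r2, hQsymm i j x]
      ring
    rw [e1]
    rw [show (∫ x, fderiv ℝ (N i) x (e j) * (P i x * P j x))
        = -∫ x, N i x * fderiv ℝ (fun y => P i y * P j y) x (e j) by linarith [hibp]]
    rw [e2, integral_add (intN i _ ((hPc i).fun_mul (hQc j j))) (intN i _ ((hPc j).fun_mul (hQc j i)))]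
    ring
  -- the curvature term
  have EqH : (∫ x, H x * (inner ℝ (η x) (gradient φ x) : ℝ))
      = -ε * ∑ i : Fin d, ∑ j : Fin d, (∫ x, N i x * (P i x * Q j j x))
        + ε⁻¹ * ∑ i : Fin d, ∫ x, N i x * (deriv W (φ x) * P i x) := by
    have e1 : (∫ x, H x * (inner ℝ (η x) (gradient φ x) : ℝ))
        = ∫ x, ∑ i : Fin d, (-ε * (∑ j : Fin d, N i x * (P i x * Q j j x))
            + ε⁻¹ * (N i x * (deriv W (φ x) * P i x))) := by
      refine integral_congr_ae (Filter.Eventually.of_forall fun x => ?_)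
      dsimp only
      rw [hH x, hg3 x]
      simp only [hQun]
      rw [Finset.mul_sum]
      refine Finset.sum_congr rfl fun i _ => ?_
      rw [add_mul]
      refine congrArg₂ (· + ·) ?_ (by ring)
      rw [mul_assoc]
      congr 1
      rw [Finset.sum_mul]
      exact Finset.sum_congr rfl fun j _ => by ring
    have intij : ∀ i : Fin d, Integrable (fun x =>
        -ε * (∑ j : Fin d, N i x * (P i x * Q j j x))
          + ε⁻¹ * (N i x * (deriv W (φ x) * P i x))) (volume : Measure E) := by
      intro i
      exact ((integrable_finset_sum _ fun j _ =>
          intN i _ ((hPc i).mul (hQc j j))).const_mul _).add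
        ((intN i _ (hW'c.mul (hPc i))).const_mul _)
    rw [e1, integral_finset_sum _ (fun i _ => intij i)]
    have e2 : ∀ i : Fin d, (∫ x, (-ε * (∑ j : Fin d, N i x * (P i x * Q j j x))
        + ε⁻¹ * (N i x * (deriv W (φ x) * P i x))))
        = -ε * (∑ j : Fin d, ∫ x, N i x * (P i x * Q j j x))
          + ε⁻¹ * ∫ x, N i x * (deriv W (φ x) * P i x) := by
      intro i
      rw [integral_add ((integrable_finset_sum _ fun j _ =>
          intN i _ ((hPc i).fun_mul (hQc j j))).const_mul _)
        ((intN i _ (hW'c.fun_mul (hPc i))).const_mul _),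
        integral_const_mul, integral_const_mul,
        integral_finset_sum _ (fun j _ => intN i _ ((hPc i).fun_mul (hQc j j)))]
    rw [Finset.sum_congr rfl fun i _ => e2 i]
    rw [Finset.sum_add_distrib, ← Finset.mul_sum, ← Finset.mul_sum]
  -- the divergence term
  have EqF : (∫ x, (∑ i, D i i x) * F x)
      = -(ε * ∑ i : Fin d, ∑ j : Fin d, (∫ x, N i x * (P j x * Q j i x))
          + ε⁻¹ * ∑ i : Fin d, ∫ x, N i x * (deriv W (φ x) * P i x)) := by
    have e1 : (∫ x, (∑ i, D i i x) * F x) = ∑ j : Fin d, ∫ x, D j j x * F x := by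
      rw [← integral_finset_sum _ (fun j _ => cInt _ ((hDc j j).fun_mul hFc) (hDcs j j).mul_right)]
      refine integral_congr_ae (Filter.Eventually.of_forall fun x => ?_)
      dsimp only
      rw [Finset.sum_mul]
    have e2 : ∀ j : Fin d, (∫ x, D j j x * F x)
        = -(ε * (∑ k : Fin d, ∫ x, N j x * (P k x * Q k j x))
            + ε⁻¹ * ∫ x, N j x * (deriv W (φ x) * P j x)) := by
      intro j
      have hibp := myIBP F (N j) hFcd (hNd j) (hNcs j) (e j)
      have s1 : (∫ x, D j j x * F x) = ∫ x, fderiv ℝ (N j) x (e j) * F x := by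
        refine integral_congr_ae (Filter.Eventually.of_forall fun x => ?_)
        rfl
      have s2 : (∫ x, N j x * fderiv ℝ F x (e j))
          = ∫ x, ((∑ k : Fin d, ε * (N j x * (P k x * Q k j x)))
              + ε⁻¹ * (N j x * (deriv W (φ x) * P j x))) := by
        refine integral_congr_ae (Filter.Eventually.of_forall fun x => ?_)
        dsimp only
        rw [hF' x j, Finset.mul_sum]
        rw [mul_add]
        refine congrArg₂ (· + ·) ?_ (by ring)
        rw [Finset.mul_sum]
        refine Finset.sum_congr rfl fun k _ => by ring
      rw [s1, show (∫ x, fderiv ℝ (N j) x (e j) * F x)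
          = -∫ x, N j x * fderiv ℝ F x (e j) by linarith [hibp]]
      rw [s2, integral_add (integrable_finset_sum _ fun k _ =>
          (intN j _ ((hPc k).fun_mul (hQc k j))).const_mul _)
        ((intN j _ (hW'c.fun_mul (hPc j))).const_mul _),
        integral_finset_sum _ (fun k _ => (intN j _ ((hPc k).fun_mul (hQc k j))).const_mul _),
        integral_const_mul]
      simp only [integral_const_mul]
      rw [← Finset.mul_sum]
    rw [e1, Finset.sum_congr rfl fun j _ => e2 j]
    simp only [neg_add, Finset.sum_add_distrib, Finset.sum_neg_distrib, ← Finset.mul_sum]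
  rw [EqL, EqH, EqF]
  have expand : (∑ i : Fin d, ∑ j : Fin d,
      (-(∫ x, N i x * (P i x * Q j j x)) - ∫ x, N i x * (P j x * Q j i x)))
      = -(∑ i : Fin d, ∑ j : Fin d, (∫ x, N i x * (P i x * Q j j x)))
        - ∑ i : Fin d, ∑ j : Fin d, (∫ x, N i x * (P j x * Q j i x)) := by
    simp [Finset.sum_sub_distrib, Finset.sum_neg_distrib]
  rw [expand]
  ring
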